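/- Let U° = diag(u₁,u₂) with x = u₁ - u₂ ≠ 0, n a nonzero integer, A = [[0,1],[1,0]]. Any two polynomial solutions ψ, ψ' ∈ GL₂(ℂ[z]) of z dψ/dz = (1/z)[U°, ψ] - nAψ differ by right multiplication by a constant invertible diagonal matrix: ψ' = ψ·δ with δ diagonal, constant, invertible. In particular the constant term ψ(0) of any such solution is diagonal. -/

import Mathlib

open Matrix Finset

private lemma stmt8_offdiag (u₁ u₂ : ℂ) (M : Matrix (Fin 2) (Fin 2) ℂ)
    (h : !![u₁, 0; 0, u₂] * M - M * !![u₁, 0; 0, u₂] = 0) :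
    (u₁ - u₂) * M 0 1 = 0 ∧ (u₁ - u₂) * M 1 0 = 0 := by
  have h01 := congrFun (congrFun h 0) 1
  have h10 := congrFun (congrFun h 1) 0
  simp [Matrix.mul_apply, Matrix.vecMul, dotProduct, Fin.sum_univ_two] at h01 h10
  exact ⟨by linear_combination h01, by linear_combination -h10⟩

private lemma stmt8_rec_entries (u₁ u₂ c : ℂ) (M N : Matrix (Fin 2) (Fin 2) ℂ) (m : ℂ)
    (h : !![u₁, 0; 0, u₂] * N - N * !![u₁, 0; 0, u₂]
        = (m • !![(0:ℂ), 1; 1, 0] + c • 1) * M) :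
    (m * M 1 0 + c * M 0 0 = 0) ∧ (m * M 0 1 + c * M 1 1 = 0) ∧
    ((u₁ - u₂) * N 0 1 = m * M 1 1 + c * M 0 1) ∧
    ((u₂ - u₁) * N 1 0 = m * M 0 0 + c * M 1 0) := by
  have h00 := congrFun (congrFun h 0) 0
  have h01 := congrFun (congrFun h 0) 1
  have h10 := congrFun (congrFun h 1) 0
  have h11 := congrFun (congrFun h 1) 1
  simp [Matrix.mul_apply, Matrix.vecMul, dotProduct, Fin.sum_univ_two,
    Matrix.one_apply] at h00 h01 h10 h11
  exact ⟨by linear_combination -h00, by linear_combination -h11,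
    by linear_combination h01, by linear_combination h10⟩

/-- Any two polynomial solutions `ψ, ψ' ∈ GL₂(ℂ[z])` of
`z dψ/dz = (1/z)[U°,ψ] - nAψ` (with `U° = diag(u₁,u₂)`, `u₁ - u₂ = x ≠ 0`, `n ≠ 0`,
`A = [[0,1],[1,0]]`) differ by right multiplication by a constant invertible diagonal
matrix `δ`: `ψ'_k = ψ_k·δ` for all `k`.  In particular the constant term `ψ(0)` of any
such solution is diagonal.  The equation is encoded coefficientwise as
`[U°,ψ_{k+1}] = (nA + k·Id)ψ_k` (with the `z⁻¹` condition `[U°,ψ₀] = 0`), polynomiality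
as eventual vanishing of coefficients, and invertibility via polynomial Cauchy-product
inverses. -/
theorem statement8 (u₁ u₂ x : ℂ) (hx : x ≠ 0) (hux : u₁ - u₂ = x)
    (n : ℤ) (hn : n ≠ 0)
    (ψ ψ' χ χ' : ℕ → Matrix (Fin 2) (Fin 2) ℂ)
    -- both are polynomials
    (hpoly : ∃ N : ℕ, ∀ k, N < k → ψ k = 0 ∧ ψ' k = 0 ∧ χ k = 0 ∧ χ' k = 0)
    -- both solve the equation (including the z⁻¹ coefficient)
    (h0 : !![u₁, 0; 0, u₂] * ψ 0 - ψ 0 * !![u₁, 0; 0, u₂] = 0)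
    (h0' : !![u₁, 0; 0, u₂] * ψ' 0 - ψ' 0 * !![u₁, 0; 0, u₂] = 0)
    (hrec : ∀ k : ℕ,
      !![u₁, 0; 0, u₂] * ψ (k + 1) - ψ (k + 1) * !![u₁, 0; 0, u₂]
        = ((n : ℂ) • !![(0:ℂ), 1; 1, 0] + (k : ℂ) • 1) * ψ k)
    (hrec' : ∀ k : ℕ,
      !![u₁, 0; 0, u₂] * ψ' (k + 1) - ψ' (k + 1) * !![u₁, 0; 0, u₂]
        = ((n : ℂ) • !![(0:ℂ), 1; 1, 0] + (k : ℂ) • 1) * ψ' k)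
    -- invertibility in GL₂(ℂ[z])
    (hinv : ∀ m : ℕ, ∑ j ∈ Finset.range (m + 1), ψ j * χ (m - j)
        = if m = 0 then 1 else 0)
    (hinv' : ∀ m : ℕ, ∑ j ∈ Finset.range (m + 1), ψ' j * χ' (m - j)
        = if m = 0 then 1 else 0) :
    (∃ δ : Matrix (Fin 2) (Fin 2) ℂ, IsUnit δ ∧ (∀ i j, i ≠ j → δ i j = 0) ∧
      ∀ k, ψ' k = ψ k * δ) ∧
    (∀ i j, i ≠ j → ψ 0 i j = 0) := by
  ---
  -- ψ 0 and ψ' 0 are diagonal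
  obtain ⟨hb0, hc0⟩ := stmt8_offdiag u₁ u₂ (ψ 0) h0
  obtain ⟨hb0', hc0'⟩ := stmt8_offdiag u₁ u₂ (ψ' 0) h0'
  rw [hux, mul_eq_zero] at hb0 hc0 hb0' hc0'
  have hψ01 : ψ 0 0 1 = 0 := hb0.resolve_left hx
  have hψ10 : ψ 0 1 0 = 0 := hc0.resolve_left hx
  have hψ01' : ψ' 0 0 1 = 0 := hb0'.resolve_left hx
  have hψ10' : ψ' 0 1 0 = 0 := hc0'.resolve_left hx
  -- ψ 0 and ψ' 0 are invertible, so their diagonal entries are nonzero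
  have hunit : ψ 0 * χ 0 = 1 := by have := hinv 0; simpa using this
  have hunit' : ψ' 0 * χ' 0 = 1 := by have := hinv' 0; simpa using this
  have hdet : (ψ 0).det ≠ 0 := by
    intro h
    have := congrArg Matrix.det hunit
    rw [Matrix.det_mul, h, zero_mul, Matrix.det_one] at this
    exact zero_ne_one this
  have hdet' : (ψ' 0).det ≠ 0 := by
    intro h
    have := congrArg Matrix.det hunit'
    rw [Matrix.det_mul, h, zero_mul, Matrix.det_one] at this
    exact zero_ne_one this
  rw [Matrix.det_fin_two, hψ01, hψ10] at hdet
  rw [Matrix.det_fin_two, hψ01', hψ10'] at hdet'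
  simp only [zero_mul, mul_zero, sub_zero] at hdet hdet'
  have ha0 : ψ 0 0 0 ≠ 0 := fun h => hdet (by rw [h, zero_mul])
  have hd0 : ψ 0 1 1 ≠ 0 := fun h => hdet (by rw [h, mul_zero])
  have ha0' : ψ' 0 0 0 ≠ 0 := fun h => hdet' (by rw [h, zero_mul])
  have hd0' : ψ' 0 1 1 ≠ 0 := fun h => hdet' (by rw [h, mul_zero])
  set d₀ : ℂ := ψ' 0 0 0 / ψ 0 0 0 with hd₀def
  set d₁ : ℂ := ψ' 0 1 1 / ψ 0 1 1 with hd₁def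
  -- key induction
  have key : ∀ k, ψ' k 0 0 = ψ k 0 0 * d₀ ∧ ψ' k 1 0 = ψ k 1 0 * d₀ ∧
      ψ' k 0 1 = ψ k 0 1 * d₁ ∧ ψ' k 1 1 = ψ k 1 1 * d₁ := by
    intro k
    induction k with
    | zero =>
      refine ⟨by rw [hd₀def]; field_simp, by rw [hψ10, hψ10', zero_mul],
        by rw [hψ01, hψ01', zero_mul], by rw [hd₁def]; field_simp⟩
    | succ k ih =>
      obtain ⟨iha, ihc, ihb, ihd⟩ := ih
      obtain ⟨_, _, E3, E4⟩ := stmt8_rec_entries u₁ u₂ (k : ℂ) (ψ k) (ψ (k+1)) (n : ℂ) (hrec k)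
      obtain ⟨_, _, E3', E4'⟩ := stmt8_rec_entries u₁ u₂ (k : ℂ) (ψ' k) (ψ' (k+1)) (n : ℂ) (hrec' k)
      obtain ⟨F1, F2, _, _⟩ := stmt8_rec_entries u₁ u₂ ((k+1 : ℕ) : ℂ) (ψ (k+1)) (ψ (k+2))
        (n : ℂ) (by have := hrec (k+1); push_cast at this ⊢; convert this using 3 <;> ring_nf)
      obtain ⟨F1', F2', _, _⟩ := stmt8_rec_entries u₁ u₂ ((k+1 : ℕ) : ℂ) (ψ' (k+1)) (ψ' (k+2))
        (n : ℂ) (by have := hrec' (k+1); push_cast at this ⊢; convert this using 3 <;> ring_nf)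
      push_cast at F1 F2 F1' F2'
      rw [hux] at E3 E3'
      have hk1 : (k : ℂ) + 1 ≠ 0 := by
        exact_mod_cast Nat.cast_add_one_ne_zero (R := ℂ) k
      have hb : ψ' (k+1) 0 1 = ψ (k+1) 0 1 * d₁ := by
        apply mul_left_cancel₀ hx
        linear_combination E3' - E3 * d₁ + (n : ℂ) * ihd + (k : ℂ) * ihb
      have hc : ψ' (k+1) 1 0 = ψ (k+1) 1 0 * d₀ := by
        apply mul_left_cancel₀ (neg_ne_zero.mpr hx)
        have hx' : u₂ - u₁ = -x := by linear_combination -hux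
        rw [hx'] at E4 E4'
        linear_combination E4' - E4 * d₀ + (n : ℂ) * iha + (k : ℂ) * ihc
      have ha : ψ' (k+1) 0 0 = ψ (k+1) 0 0 * d₀ := by
        apply mul_left_cancel₀ hk1
        linear_combination F1' - F1 * d₀ - (n : ℂ) * hc
      have hd : ψ' (k+1) 1 1 = ψ (k+1) 1 1 * d₁ := by
        apply mul_left_cancel₀ hk1
        linear_combination F2' - F2 * d₁ - (n : ℂ) * hb
      exact ⟨ha, hc, hb, hd⟩
  refine ⟨⟨!![d₀, 0; 0, d₁], ?_, ?_, ?_⟩, ?_⟩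
  · rw [Matrix.isUnit_iff_isUnit_det, Matrix.det_fin_two_of]
    simp only [mul_zero, zero_mul, sub_zero]
    exact (IsUnit.mul_iff.mpr ⟨(div_ne_zero ha0' ha0).isUnit,
      (div_ne_zero hd0' hd0).isUnit⟩)
  · intro i j hij
    fin_cases i <;> fin_cases j <;>
      first
        | exact absurd rfl hij
        | rfl
  · intro k
    obtain ⟨ha, hc, hb, hd⟩ := key k
    ext i j
    fin_cases i <;> fin_cases j <;>
      simp [Matrix.mul_apply, Fin.sum_univ_two, ha, hb, hc, hd]
  · intro i j hij
    fin_cases i <;> fin_cases j <;>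
      first
        | exact absurd rfl hij
        | exact hψ01
        | exact hψ10
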